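/- Suppose the conditional preference probability given hidden context C satisfies P(L=1 | x,y,y', C=c) = σ(r_c(x,y) − r_c(x,y')) for context-specific reward functions r_c, and C takes two values with probabilities p and 1−p. Then the marginal preference probability P(L=1 | x,y,y') = p·σ(r_0(x,y) − r_0(x,y')) + (1−p)·σ(r_1(x,y) − r_1(x,y')) is in general not of BTL form: there exist reward values such that no single reward function r satisfies σ(r(x,y) − r(x,y')) = P(L=1 | x,y,y') for all pairs simultaneously while respecting transitivity of the induced strict preference; concretely, for three responses y₁, y₂, y₃ there exist context-specific rewards such that the marginal probabilities satisfy P(y₁ ≻ y₂) > 1/2, P(y₂ ≻ y₃) > 1/2, but P(y₁ ≻ y₃) < 1/2. -/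
import Mathlib


noncomputable def logistic (t : ℝ) : ℝ := 1 / (1 + Real.exp (-t))

lemma logistic_neg_log (x : ℝ) (hx : 0 < x) :
    logistic (-Real.log x) = 1 / (1 + x) := by
  simp [logistic, Real.exp_log hx]

/-- A mixture of two BTL models is in general not of BTL form: there exist a mixing
weight `p ∈ (0,1)` and context-specific rewards `r₀, r₁` on three responses such
that the marginal preference probabilities are intransitive:
`P(y₁ ≻ y₂) > 1/2`, `P(y₂ ≻ y₃) > 1/2`, but `P(y₁ ≻ y₃) < 1/2`. -/
theorem stmt_11 :
    ∃ (p : ℝ), p ∈ Set.Ioo (0 : ℝ) 1 ∧ ∃ r₀ r₁ : Fin 3 → ℝ,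
      (∀ q : Fin 3 → Fin 3 → ℝ,
        (∀ i j, q i j =
          p * logistic (r₀ i - r₀ j) + (1 - p) * logistic (r₁ i - r₁ j)) →
        q 0 1 > 1 / 2 ∧ q 1 2 > 1 / 2 ∧ q 0 2 < 1 / 2) := by
  refine ⟨1/5, ⟨by norm_num, by norm_num⟩,
    ![6, 3, 0], ![0, Real.log (3/2), 2 * Real.log (3/2)], ?_⟩
  intro q hq
  have h01 := hq 0 1
  have h12 := hq 1 2
  have h02 := hq 0 2
  simp only [Matrix.cons_val_zero, Matrix.cons_val_one, Matrix.head_cons,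
    Matrix.cons_val_two, Matrix.tail_cons] at h01 h12 h02
  have hl : (0:ℝ) < 3/2 := by norm_num
  have e1 : logistic (0 - Real.log (3/2)) = 2/5 := by
    rw [show (0:ℝ) - Real.log (3/2) = -Real.log (3/2) by ring, logistic_neg_log _ hl]
    norm_num
  have e2 : logistic (Real.log (3/2) - 2 * Real.log (3/2)) = 2/5 := by
    rw [show Real.log (3/2) - 2 * Real.log (3/2) = -Real.log (3/2) by ring,
      logistic_neg_log _ hl]
    norm_num
  have e3 : logistic (0 - 2 * Real.log (3/2)) = 4/13 := by
    have : (0:ℝ) - 2 * Real.log (3/2) = -Real.log ((3/2)^2) := by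
      rw [Real.log_pow]; push_cast; ring
    rw [this, logistic_neg_log _ (by norm_num)]
    norm_num
  -- bounds on logistic 3 and logistic 6
  have he : (2.7182818283 : ℝ) < Real.exp 1 := Real.exp_one_gt_d9
  have he3 : (9 : ℝ) < Real.exp 3 := by
    have h3 : Real.exp 3 = (Real.exp 1)^3 := by
      rw [← Real.exp_nat_mul]; norm_num
    have h27 : (2.7:ℝ) < Real.exp 1 := by linarith
    have := pow_lt_pow_left₀ h27 (by norm_num : (0:ℝ) ≤ 2.7) (by norm_num : (3:ℕ) ≠ 0)
    rw [h3]; norm_num at this; linarith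
  have hexp3pos : (0:ℝ) < Real.exp (-(3:ℝ)) := Real.exp_pos _
  have hexp3 : Real.exp (-(3:ℝ)) < 1/9 := by
    rw [Real.exp_neg]
    rw [inv_lt_comm₀ (Real.exp_pos 3) (by norm_num)] at *
    · linarith
  have l3 : logistic 3 > 9/10 := by
    have h1 : (0:ℝ) < 1 + Real.exp (-(3:ℝ)) := by positivity
    rw [logistic, gt_iff_lt, lt_div_iff₀ h1]
    nlinarith
  have l6 : logistic 6 < 1 := by
    have h1 : (0:ℝ) < 1 + Real.exp (-(6:ℝ)) := by positivity
    rw [logistic, div_lt_one h1]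
    nlinarith [Real.exp_pos (-(6:ℝ))]
  rw [show (6:ℝ) - 3 = 3 by norm_num, e1] at h01
  rw [show (3:ℝ) - 0 = 3 by norm_num, e2] at h12
  rw [show (6:ℝ) - 0 = 6 by norm_num, e3] at h02
  refine ⟨by rw [h01]; linarith, by rw [h12]; linarith, by rw [h02]; linarith⟩
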